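/- Let a, b ≥ 0 and consider S_{a+b} × S_{a+b} acting on pairs of lists. Fix distinct reals s_1 > ... > s_{a+b}. For any partition of {s_1,...,s_{a+b}} into Φ = {φ_1 > ... > φ_a} and Ψ = {ψ_1 > ... > ψ_b}, the permutation in S_{a+b} × S_{a+b} sending (φ_1,...,φ_a,ψ_1,...,ψ_b ; ψ_1,...,ψ_b,φ_1,...,φ_a) to (s_1,...,s_{a+b} ; s_1,...,s_{a+b}) has sign (-1)^{ab}, independent of the choice of Φ. -/

import Mathlib

lemma aux_append_inj {a b : ℕ} {φ : Fin a → ℝ} {ψ : Fin b → ℝ}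
    (hφ : Function.Injective φ) (hψ : Function.Injective ψ)
    (hdisj : Disjoint (Set.range φ) (Set.range ψ)) :
    Function.Injective (Fin.append φ ψ) := by
  intro x y hxy
  induction x using Fin.addCases with
  | left i =>
    induction y using Fin.addCases with
    | left j =>
      simp only [Fin.append_left] at hxy
      rw [hφ hxy]
    | right j =>
      simp only [Fin.append_left, Fin.append_right] at hxy
      exact absurd ⟨j, hxy.symm⟩ (Set.disjoint_left.mp hdisj ⟨i, rfl⟩)
  | right i =>
    induction y using Fin.addCases with
    | left j =>
      simp only [Fin.append_left, Fin.append_right] at hxy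
      exact absurd ⟨i, hxy⟩ (Set.disjoint_left.mp hdisj ⟨j, rfl⟩)
    | right j =>
      simp only [Fin.append_right] at hxy
      rw [hψ hxy]

lemma aux_append_flip {a b : ℕ} (φ : Fin a → ℝ) (ψ : Fin b → ℝ) (x : Fin (b + a)) :
    Fin.append ψ φ x = Fin.append φ ψ (finAddFlip x) := by
  induction x using Fin.addCases with
  | left j => rw [Fin.append_left, finAddFlip_apply_castAdd, Fin.append_right]
  | right j => rw [Fin.append_right, finAddFlip_apply_natAdd, Fin.append_left]

lemma aux_rotate_pow_val (m k : ℕ) (x : Fin m) :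
    (((finRotate m) ^ k) x).val = (x.val + k) % m := by
  cases m with
  | zero => exact x.elim0
  | succ n =>
    induction k with
    | zero => simp [Nat.mod_eq_of_lt x.isLt]
    | succ k ih =>
      rw [pow_succ', Equiv.Perm.mul_apply, finRotate_succ_apply, Fin.val_add, ih,
        Fin.val_one', ← Nat.add_mod, Nat.add_assoc]

lemma aux_sigma_eq (a b : ℕ) :
    ((finCongr (Nat.add_comm a b)).trans finAddFlip : Equiv.Perm (Fin (a + b)))
      = (finRotate (a + b)) ^ a := by
  apply Equiv.ext
  intro x
  apply Fin.ext
  rw [aux_rotate_pow_val]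
  simp only [Equiv.trans_apply, finCongr_apply]
  have hx' : x.val < b + a := by omega
  rw [show Fin.cast (Nat.add_comm a b) x = (⟨x.val, hx'⟩ : Fin (b + a)) from rfl]
  by_cases hx : x.val < b
  · rw [finAddFlip_apply_mk_left hx, Nat.mod_eq_of_lt (by omega)]
    exact Nat.add_comm a x.val
  · rw [finAddFlip_apply_mk_right (by omega) hx',
      show x.val + a = (x.val - b) + 1 * (a + b) by omega,
      Nat.add_mul_mod_self_right, Nat.mod_eq_of_lt (by omega)]

theorem stmt_5 (a b : ℕ) (s : Fin (a + b) → ℝ) (hs : StrictAnti s)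
    (φ : Fin a → ℝ) (ψ : Fin b → ℝ) (hφ : StrictAnti φ) (hψ : StrictAnti ψ)
    (hdisj : Disjoint (Set.range φ) (Set.range ψ))
    (hunion : Set.range φ ∪ Set.range ψ = Set.range s)
    (u v : Equiv.Perm (Fin (a + b)))
    (hu : ∀ i : Fin (a + b), Fin.append φ ψ (u i) = s i)
    (hv : ∀ i : Fin (a + b), Fin.append ψ φ (Fin.cast (Nat.add_comm a b) (v i)) = s i) :
    Equiv.Perm.sign u * Equiv.Perm.sign v = (-1 : ℤˣ) ^ (a * b) := by
  set σ : Equiv.Perm (Fin (a + b)) := (finCongr (Nat.add_comm a b)).trans finAddFlip with hσ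
  have hinj := aux_append_inj hφ.injective hψ.injective hdisj
  have huv : u = σ * v := by
    apply Equiv.ext
    intro i
    apply hinj
    rw [hu i, Equiv.Perm.mul_apply, hσ]
    simp only [Equiv.trans_apply, finCongr_apply]
    rw [← aux_append_flip φ ψ]
    exact (hv i).symm
  have hsignσ : Equiv.Perm.sign σ = (-1 : ℤˣ) ^ (a * b) := by
    rw [hσ, aux_sigma_eq, map_pow]
    cases hab : a + b with
    | zero =>
      have ha0 : a = 0 := by omega
      subst ha0
      simp
    | succ n =>
      rw [sign_finRotate, ← pow_mul]
      rcases a with _ | c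
      · simp
      · have hn : n = c + b := by omega
        subst hn
        rw [Nat.add_sub_cancel, show (c + b) * (c + 1) = (c + 1) * b + c * (c + 1) by ring, pow_add,
          Even.neg_one_pow (Nat.even_mul_succ_self c), mul_one]
  rw [huv, map_mul, hsignσ, mul_assoc, Int.units_mul_self, mul_one]
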